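/- Assume k ≤ n − 3 and let λ : {1,…,n} × {0,1} → F be injective. Let R ⊆ {3,…,n} be a set with |R| = k + 1. If c and c' are codewords of C(n,k,2,3,λ) such that c(i,1,a) + c(i,3,a(2,a_2⊕1)) = c'(i,1,a) + c'(i,3,a(2,a_2⊕1)) for every i ∈ R and every a ∈ {0,1}^n, then: (1) c(2,b,a) = c'(2,b,a) for every b ∈ {1,3} and every a ∈ {0,1}^n, and (2) c(1,1,a) + c(1,3,a(2,a_2⊕1)) = c'(1,1,a) + c'(1,3,a(2,a_2⊕1)) for every a ∈ {0,1}^n. -/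

import Mathlib

lemma vdm_fin {F : Type*} [Field F] {N : ℕ} (x v : Fin N → F)
    (hx : Function.Injective x)
    (h : ∀ t : Fin N, ∑ j, x j ^ (t : ℕ) * v j = 0) : ∀ j, v j = 0 := by
  have hdet : (Matrix.vandermonde x).det ≠ 0 := by
    rw [Matrix.det_vandermonde]
    apply Finset.prod_ne_zero_iff.2
    intro i _
    apply Finset.prod_ne_zero_iff.2
    intro j hj
    have : i ≠ j := (Finset.mem_Ioi.1 hj).ne
    exact sub_ne_zero.2 fun hxy => this (hx hxy.symm)
  have hmv : (Matrix.vandermonde x).transpose.mulVec v = 0 := by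
    funext t
    simpa [Matrix.mulVec, dotProduct, Matrix.vandermonde, Matrix.transpose] using h t
  have := Matrix.eq_zero_of_mulVec_eq_zero (by rwa [Matrix.det_transpose]) hmv
  exact fun j => congrFun this j

lemma vdm_finset {F : Type*} [Field F] {ι : Type*} (s : Finset ι) (x v : ι → F)
    (hx : Set.InjOn x s)
    (h : ∀ t < s.card, ∑ i ∈ s, x i ^ t * v i = 0) : ∀ i ∈ s, v i = 0 := by
  classical
  let e := s.equivFin
  have key := vdm_fin (fun j => x (e.symm j)) (fun j => v (e.symm j))
    (fun j₁ j₂ hj => by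
      have := hx (e.symm j₁).2 (e.symm j₂).2 hj
      exact e.symm.injective (Subtype.ext this))
    (fun t => by
      have := h t t.2
      rw [← Finset.sum_coe_sort s (fun i => x i ^ (t:ℕ) * v i)] at this
      rw [Equiv.sum_comp e.symm (fun i => x (i:ι) ^ (t:ℕ) * v (i:ι))]
      exact this)
  intro i hi
  have := key (e ⟨i, hi⟩)
  simpa using this



/-- The code `C(n,k,s,m,λ)`: an array `c : {1,…,n} × {1,…,m} × {0,…,s-1}^n → F`
(node index `i : Fin n`, block index `b ∈ {1,…,m}` as a natural number,
`a : Fin n → Fin s`) satisfying the parity-check equations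
`∑_{i=1}^n λ(i,a_i)^t · c(i,b,a) = 0` for all `t ∈ {0,…,n-k-1}`,
`b ∈ {1,…,m}` and `a ∈ {0,…,s-1}^n`. -/
def IsCodeword {F : Type*} [Field F] {n : ℕ} (k s m : ℕ)
    (lam : Fin n → Fin s → F) (c : Fin n → ℕ → (Fin n → Fin s) → F) : Prop :=
  ∀ t < n - k, ∀ b ∈ Finset.Icc 1 m, ∀ a : Fin n → Fin s,
    ∑ i, lam i (a i) ^ t * c i b a = 0

/-- first-round recovery at node 2 in `C(n,k,2,3,λ)`.  Nodes 1 and 2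
of the paper are `i1, i2 : Fin n` with indices `0, 1`; the helper set
`R ⊆ {3,…,n}` consists of nodes with index `≥ 2`, and `|R| = k+1`.  If the
downloaded sums `c(i,1,a) + c(i,3,a(2,a₂⊕1))` for `i ∈ R` agree for two
codewords, then (1) the coordinates `(2,b,a)`, `b ∈ {1,3}`, agree, and (2) the
sums at node 1 agree. -/
theorem stmt_4 {F : Type*} [Field F] (n k : ℕ) (hk : 1 ≤ k) (hkn : k + 3 ≤ n)
    (lam : Fin n → Fin 2 → F)
    (hlam : Function.Injective fun p : Fin n × Fin 2 => lam p.1 p.2)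
    (i1 i2 : Fin n) (hi1 : (i1 : ℕ) = 0) (hi2 : (i2 : ℕ) = 1)
    (R : Finset (Fin n)) (hR : ∀ i ∈ R, 2 ≤ (i : ℕ)) (hRcard : R.card = k + 1)
    (c c' : Fin n → ℕ → (Fin n → Fin 2) → F)
    (hc : IsCodeword k 2 3 lam c) (hc' : IsCodeword k 2 3 lam c')
    (heq : ∀ i ∈ R, ∀ a : Fin n → Fin 2,
      c i 1 a + c i 3 (Function.update a i2 (a i2 + 1))
        = c' i 1 a + c' i 3 (Function.update a i2 (a i2 + 1))) :
    (∀ b ∈ ({1, 3} : Finset ℕ), ∀ a : Fin n → Fin 2, c i2 b a = c' i2 b a) ∧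
    (∀ a : Fin n → Fin 2,
      c i1 1 a + c i1 3 (Function.update a i2 (a i2 + 1))
        = c' i1 1 a + c' i1 3 (Function.update a i2 (a i2 + 1))) := by
  classical
  have hne2 : ∀ u : Fin 2, u ≠ u + 1 := by decide
  have hpp : ∀ u : Fin 2, u + 1 + 1 = u := by decide
  have hi12 : i1 ≠ i2 := fun h => by rw [h] at hi1; omega
  have hi2R : i2 ∉ R := fun h => by have := hR i2 h; omega
  have hi1R : i1 ∉ R := fun h => by have := hR i1 h; omega
  set d : Fin n → ℕ → (Fin n → Fin 2) → F := fun i b a => c i b a - c' i b a with hd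
  have hdcode : ∀ t < n - k, ∀ b ∈ Finset.Icc 1 3, ∀ a : Fin n → Fin 2,
      ∑ i, lam i (a i) ^ t * d i b a = 0 := by
    intro t ht b hb a
    have h1 := hc t ht b hb a
    have h2 := hc' t ht b hb a
    simp only [hd, mul_sub, Finset.sum_sub_distrib, h1, h2, sub_zero]
  have key : ∀ a : Fin n → Fin 2,
      d i2 1 a = 0 ∧ d i2 3 (Function.update a i2 (a i2 + 1)) = 0 ∧
        d i1 1 a + d i1 3 (Function.update a i2 (a i2 + 1)) = 0 := by
    intro a
    set a' : Fin n → Fin 2 := Function.update a i2 (a i2 + 1) with ha'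
    obtain ⟨x, hxl, hxr⟩ : ∃ x : Fin n ⊕ Unit → F,
        (∀ i, x (Sum.inl i) = lam i (a i)) ∧ x (Sum.inr ()) = lam i2 (a i2 + 1) :=
      ⟨Sum.elim (fun i => lam i (a i)) (fun _ => lam i2 (a i2 + 1)), fun _ => rfl, rfl⟩
    obtain ⟨v, hvl, hvr⟩ : ∃ v : Fin n ⊕ Unit → F,
        (∀ i, v (Sum.inl i) = if i = i2 then d i2 1 a else d i 1 a + d i 3 a') ∧
          v (Sum.inr ()) = d i2 3 a' :=
      ⟨Sum.elim (fun i => if i = i2 then d i2 1 a else d i 1 a + d i 3 a')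
        (fun _ => d i2 3 a'), fun _ => rfl, rfl⟩
    set s : Finset (Fin n ⊕ Unit) :=
      ((Finset.univ \ R).map ⟨Sum.inl, Sum.inl_injective⟩) ∪ {Sum.inr ()} with hs
    have hdisj : Disjoint ((Finset.univ \ R).map ⟨Sum.inl, Sum.inl_injective⟩)
        ({Sum.inr ()} : Finset (Fin n ⊕ Unit)) := by
      simp [Finset.disjoint_singleton_right]
    have hkn' : k + 1 ≤ n := by omega
    have hcardsd : (Finset.univ \ R).card = n - (k + 1) := by
      rw [Finset.card_sdiff_of_subset (Finset.subset_univ R), hRcard, Finset.card_univ,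
        Fintype.card_fin]
    have hcard : s.card = n - k := by
      rw [hs, Finset.card_union_of_disjoint hdisj, Finset.card_map, hcardsd,
        Finset.card_singleton]
      omega
    have hinj : Set.InjOn x ↑s := by
      intro p _ q _ hpq
      rcases p with i | u <;> rcases q with j | u'
      · have h2 : lam i (a i) = lam j (a j) := by rwa [hxl, hxl] at hpq
        have h3 := hlam (a₁ := (i, a i)) (a₂ := (j, a j)) h2
        exact congrArg Sum.inl (congrArg Prod.fst h3)
      · exfalso
        have h2 : lam i (a i) = lam i2 (a i2 + 1) := by rwa [hxl, hxr] at hpq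
        have h3 := hlam (a₁ := (i, a i)) (a₂ := (i2, a i2 + 1)) h2
        have h4 : i = i2 := congrArg Prod.fst h3
        have h5 : a i = a i2 + 1 := congrArg Prod.snd h3
        rw [h4] at h5
        exact hne2 _ h5
      · exfalso
        have h2 : lam j (a j) = lam i2 (a i2 + 1) := by
          rw [hxr, hxl] at hpq; exact hpq.symm
        have h3 := hlam (a₁ := (j, a j)) (a₂ := (i2, a i2 + 1)) h2
        have h4 : j = i2 := congrArg Prod.fst h3
        have h5 : a j = a i2 + 1 := congrArg Prod.snd h3
        rw [h4] at h5
        exact hne2 _ h5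
      · rfl
    have hmem2sd : i2 ∈ Finset.univ \ R := Finset.mem_sdiff.2 ⟨Finset.mem_univ _, hi2R⟩
    have hmem1sd : i1 ∈ Finset.univ \ R := Finset.mem_sdiff.2 ⟨Finset.mem_univ _, hi1R⟩
    have hsum : ∀ t < s.card, ∑ p ∈ s, x p ^ t * v p = 0 := by
      intro t ht
      rw [hcard] at ht
      have hb1 : (1 : ℕ) ∈ Finset.Icc 1 3 := by decide
      have hb3 : (3 : ℕ) ∈ Finset.Icc 1 3 := by decide
      have E1 := hdcode t ht 1 hb1 a
      have E2 := hdcode t ht 3 hb3 a'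
      have split1 : ∑ i, lam i (a i) ^ t * d i 1 a
          = (∑ i ∈ Finset.univ.erase i2, lam i (a i) ^ t * d i 1 a)
            + lam i2 (a i2) ^ t * d i2 1 a :=
        (Finset.sum_erase_add _ _ (Finset.mem_univ i2)).symm
      have split2 : ∑ i, lam i (a' i) ^ t * d i 3 a'
          = (∑ i ∈ Finset.univ.erase i2, lam i (a i) ^ t * d i 3 a')
            + lam i2 (a i2 + 1) ^ t * d i2 3 a' := by
        rw [← Finset.sum_erase_add _ _ (Finset.mem_univ i2)]
        congr 1
        · exact Finset.sum_congr rfl fun i hi => by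
            rw [ha', Function.update_of_ne (Finset.ne_of_mem_erase hi)]
        · rw [ha', Function.update_self]
      rw [split1] at E1
      rw [split2] at E2
      have hRzero : ∀ i ∈ R, d i 1 a + d i 3 a' = 0 := by
        intro i hi
        simp only [hd]
        rw [ha']
        linear_combination heq i hi a
      have hRT : R ⊆ Finset.univ.erase i2 := fun i hi =>
        Finset.mem_erase.2 ⟨fun h => hi2R (h ▸ hi), Finset.mem_univ _⟩
      have hT : Finset.univ.erase i2 \ R = (Finset.univ \ R).erase i2 := by
        ext j
        simp only [Finset.mem_sdiff, Finset.mem_erase, Finset.mem_univ, true_and,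
          and_true]
      have hsplit3 : ∑ i ∈ Finset.univ.erase i2, lam i (a i) ^ t * (d i 1 a + d i 3 a')
          = ∑ i ∈ (Finset.univ \ R).erase i2, lam i (a i) ^ t * (d i 1 a + d i 3 a') := by
        rw [← hT, ← Finset.sum_sdiff hRT]
        have hz : ∑ i ∈ R, lam i (a i) ^ t * (d i 1 a + d i 3 a') = 0 :=
          Finset.sum_eq_zero fun i hi => by rw [hRzero i hi, mul_zero]
        simp [hz]
      have hdist : ∑ i ∈ Finset.univ.erase i2, lam i (a i) ^ t * (d i 1 a + d i 3 a')
          = (∑ i ∈ Finset.univ.erase i2, lam i (a i) ^ t * d i 1 a)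
            + ∑ i ∈ Finset.univ.erase i2, lam i (a i) ^ t * d i 3 a' := by
        simp [mul_add, Finset.sum_add_distrib]
      have hgoal : ∑ p ∈ s, x p ^ t * v p
          = (∑ i ∈ (Finset.univ \ R).erase i2, lam i (a i) ^ t * (d i 1 a + d i 3 a'))
            + lam i2 (a i2) ^ t * d i2 1 a + lam i2 (a i2 + 1) ^ t * d i2 3 a' := by
        rw [hs, Finset.sum_union hdisj, Finset.sum_singleton, Finset.sum_map, hxr, hvr]
        congr 1
        rw [← Finset.sum_erase_add _ _ hmem2sd]
        congr 1
        · exact Finset.sum_congr rfl fun i hi => by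
            rw [Function.Embedding.coeFn_mk, hxl, hvl, if_neg (Finset.ne_of_mem_erase hi)]
        · rw [Function.Embedding.coeFn_mk, hxl, hvl, if_pos rfl]
      rw [hgoal]
      linear_combination E1 + E2 + hdist - hsplit3
    have hzero := vdm_finset s x v hinj hsum
    have hm2 : (Sum.inl i2 : Fin n ⊕ Unit) ∈ s :=
      Finset.mem_union_left _ (Finset.mem_map_of_mem _ hmem2sd)
    have hm1 : (Sum.inl i1 : Fin n ⊕ Unit) ∈ s :=
      Finset.mem_union_left _ (Finset.mem_map_of_mem _ hmem1sd)
    have hmr : (Sum.inr () : Fin n ⊕ Unit) ∈ s :=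
      Finset.mem_union_right _ (Finset.mem_singleton_self _)
    refine ⟨?_, ?_, ?_⟩
    · have := hzero _ hm2; rwa [hvl, if_pos rfl] at this
    · have := hzero _ hmr; rwa [hvr] at this
    · have := hzero _ hm1; rwa [hvl, if_neg hi12] at this
  constructor
  · intro b hb a
    have hb' : b = 1 ∨ b = 3 := by
      rcases Finset.mem_insert.1 hb with h | h
      · exact Or.inl h
      · exact Or.inr (Finset.mem_singleton.1 h)
    rcases hb' with rfl | rfl
    · have := (key a).1
      simp only [hd] at this
      linear_combination this
    · have h0 := (key (Function.update a i2 (a i2 + 1))).2.1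
      have harr : Function.update (Function.update a i2 (a i2 + 1)) i2
          ((Function.update a i2 (a i2 + 1)) i2 + 1) = a := by
        rw [Function.update_idem, Function.update_self, hpp, Function.update_eq_self]
      rw [harr] at h0
      simp only [hd] at h0
      linear_combination h0
  · intro a
    have := (key a).2.2
    simp only [hd] at this
    linear_combination this
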